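/- Let Φ and Ψ be continuous g-Bessel families with bounds B_Φ and B_Ψ respectively, and let (Φ, Ψ) be a continuous bi-g-frame for H with bounds A and B, with ω ↦ Ψ_ω* Φ_ω f Bochner integrable for every f ∈ H. Let (Λ, Γ) be a pair of families of bounded operators Λ_ω, Γ_ω : H → K_ω such that ω ↦ Γ_ω* Λ_ω f is Bochner integrable for every f ∈ H. If there exists a constant D with 0 < D < A and D√(B/A) < 1 such that ‖∫_Ω (Ψ_ω* Φ_ω − Γ_ω* Λ_ω) f dμ(ω)‖ ≤ D‖f‖ for all f ∈ H, then (Λ, Γ) is a continuous bi-g-Bessel pair for H with bound √(B_Φ B_Ψ) + D√(B/A). -/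

import Mathlib

open MeasureTheory ContinuousLinearMap
open scoped ComplexOrder

noncomputable section

variable {Ω : Type*} [MeasurableSpace Ω] {H : Type*}
  [NormedAddCommGroup H] [InnerProductSpace ℂ H] [CompleteSpace H]
  {G : Ω → Type*} [∀ ω, NormedAddCommGroup (G ω)]
  [∀ ω, InnerProductSpace ℂ (G ω)] [∀ ω, CompleteSpace (G ω)]

/-- `(Φ, Ψ)` is a continuous bi-`g`-frame for `H` with bounds `A`, `B`. -/
def IsContBiGFrame (μ : Measure Ω) (Φ Ψ : ∀ ω, H →L[ℂ] G ω) (A B : ℝ) : Prop :=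
  ∀ f : H,
    Integrable (fun ω => (inner ℂ (Φ ω f) (Ψ ω f) : ℂ)) μ ∧
    ((A * ‖f‖ ^ 2 : ℝ) : ℂ) ≤ ∫ ω, (inner ℂ (Φ ω f) (Ψ ω f) : ℂ) ∂μ ∧
    ∫ ω, (inner ℂ (Φ ω f) (Ψ ω f) : ℂ) ∂μ ≤ ((B * ‖f‖ ^ 2 : ℝ) : ℂ)

/-- `Φ` is a continuous `g`-Bessel family with bound `B₀`. -/
def IsContGBessel (μ : Measure Ω) (Φ : ∀ ω, H →L[ℂ] G ω) (B₀ : ℝ) : Prop :=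
  ∀ f : H,
    Integrable (fun ω => ‖Φ ω f‖ ^ 2) μ ∧
    ∫ ω, ‖Φ ω f‖ ^ 2 ∂μ ≤ B₀ * ‖f‖ ^ 2

/-- `(Λ, Γ)` is a continuous bi-`g`-Bessel pair with bound `D`. -/
def IsContBiGBessel (μ : Measure Ω) (Λ Γ : ∀ ω, H →L[ℂ] G ω) (D : ℝ) : Prop :=
  ∀ f : H,
    Integrable (fun ω => (inner ℂ (Λ ω f) (Γ ω f) : ℂ)) μ ∧
    (∫ ω, (inner ℂ (Λ ω f) (Γ ω f) : ℂ) ∂μ).re ≤ D * ‖f‖ ^ 2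

/-- Auxiliary: norm bound for the integral of `Ψ ω* (Φ ω f)` for Bessel families. -/
theorem aux_norm_int (μ : Measure Ω) (Φ Ψ : ∀ ω, H →L[ℂ] G ω) (BΦ BΨ : ℝ)
    (hBΦ : 0 < BΦ) (hBΨ : 0 < BΨ)
    (hΦ : IsContGBessel μ Φ BΦ) (hΨ : IsContGBessel μ Ψ BΨ) (f : H)
    (hw : Integrable (fun ω => adjoint (Ψ ω) (Φ ω f)) μ) :
    ‖∫ ω, adjoint (Ψ ω) (Φ ω f) ∂μ‖ ≤ Real.sqrt (BΦ * BΨ) * ‖f‖ := by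
  set g : H := ∫ ω, adjoint (Ψ ω) (Φ ω f) ∂μ with hg
  by_cases hg0 : g = 0
  · rw [hg0, norm_zero]; positivity
  by_cases hf0 : f = 0
  · exfalso
    apply hg0
    have : (fun ω => adjoint (Ψ ω) (Φ ω f)) = fun _ => (0 : H) := by
      funext ω; simp [hf0]
    rw [hg, this, integral_const]; simp
  have hgpos : 0 < ‖g‖ := norm_pos_iff.mpr hg0
  have hfpos : 0 < ‖f‖ := norm_pos_iff.mpr hf0
  set t : ℝ := (Real.sqrt BΦ * ‖f‖) / (Real.sqrt BΨ * ‖g‖) with ht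
  have htpos : 0 < t := by positivity
  have h1 : ‖g‖ ^ 2 = ‖(inner ℂ g g : ℂ)‖ := by
    rw [inner_self_eq_norm_sq_to_K, norm_pow, RCLike.norm_ofReal, abs_norm]
  have h2 : (inner ℂ g g : ℂ) = ∫ ω, (inner ℂ g (adjoint (Ψ ω) (Φ ω f)) : ℂ) ∂μ :=
    (integral_inner hw g).symm
  have h3 : ∀ ω, (inner ℂ g (adjoint (Ψ ω) (Φ ω f)) : ℂ) = inner ℂ (Ψ ω g) (Φ ω f) := by
    intro ω; rw [adjoint_inner_right]
  have h4 : ‖g‖ ^ 2 ≤ ∫ ω, (t * ‖Ψ ω g‖ ^ 2 + ‖Φ ω f‖ ^ 2 / t) / 2 ∂μ := by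
    rw [h1, h2]
    refine (norm_integral_le_integral_norm _).trans ?_
    refine integral_mono_of_nonneg (Filter.Eventually.of_forall fun ω => norm_nonneg _)
      ((((hΨ g).1.const_mul t).add ((hΦ f).1.div_const t)).div_const 2)
      (Filter.Eventually.of_forall fun ω => ?_)
    show ‖(inner ℂ g (adjoint (Ψ ω) (Φ ω f)) : ℂ)‖ ≤ (t * ‖Ψ ω g‖ ^ 2 + ‖Φ ω f‖ ^ 2 / t) / 2
    rw [h3 ω]
    refine (norm_inner_le_norm (𝕜 := ℂ) (Ψ ω g) (Φ ω f)).trans ?_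
    have hbt : ‖Φ ω f‖ ^ 2 / t * t = ‖Φ ω f‖ ^ 2 := div_mul_cancel₀ _ (ne_of_gt htpos)
    nlinarith [sq_nonneg (t * ‖Ψ ω g‖ - ‖Φ ω f‖), htpos, hbt]
  have h5 : ∫ ω, (t * ‖Ψ ω g‖ ^ 2 + ‖Φ ω f‖ ^ 2 / t) / 2 ∂μ
      = (t * ∫ ω, ‖Ψ ω g‖ ^ 2 ∂μ + (∫ ω, ‖Φ ω f‖ ^ 2 ∂μ) / t) / 2 := by
    rw [integral_div, integral_add ((hΨ g).1.const_mul t) ((hΦ f).1.div_const t),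
      integral_const_mul, integral_div]
  have hX := (hΨ g).2
  have hY := (hΦ f).2
  have e1 : Real.sqrt BΦ * Real.sqrt BΦ = BΦ := Real.mul_self_sqrt hBΦ.le
  have e2 : Real.sqrt BΨ * Real.sqrt BΨ = BΨ := Real.mul_self_sqrt hBΨ.le
  have h7a : t * (BΨ * ‖g‖ ^ 2) = Real.sqrt BΦ * ‖f‖ * (Real.sqrt BΨ * ‖g‖) := by
    rw [ht, div_mul_eq_mul_div, div_eq_iff (by positivity)]
    linear_combination (-(Real.sqrt BΦ * ‖f‖ * ‖g‖ ^ 2)) * e2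
  have h7b : (BΦ * ‖f‖ ^ 2) / t = Real.sqrt BΦ * ‖f‖ * (Real.sqrt BΨ * ‖g‖) := by
    rw [ht, div_div_eq_mul_div, div_eq_iff (by positivity : Real.sqrt BΦ * ‖f‖ ≠ 0)]
    linear_combination (-(‖f‖ ^ 2 * (Real.sqrt BΨ * ‖g‖))) * e1
  have h6 : ‖g‖ ^ 2 ≤ Real.sqrt (BΦ * BΨ) * ‖f‖ * ‖g‖ := by
    rw [h5] at h4
    have h8 : t * ∫ ω, ‖Ψ ω g‖ ^ 2 ∂μ ≤ t * (BΨ * ‖g‖ ^ 2) :=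
      mul_le_mul_of_nonneg_left hX htpos.le
    have h9 : (∫ ω, ‖Φ ω f‖ ^ 2 ∂μ) / t ≤ (BΦ * ‖f‖ ^ 2) / t :=
      (div_le_div_iff_of_pos_right htpos).mpr hY
    have hs : Real.sqrt (BΦ * BΨ) = Real.sqrt BΦ * Real.sqrt BΨ := Real.sqrt_mul hBΦ.le _
    rw [hs]
    nlinarith [h4, h8, h9, h7a, h7b]
  nlinarith [h6, hgpos]

/-- perturbation by a small operator distance gives a continuous bi-`g`-Bessel
pair with bound `√(B_Φ B_Ψ) + D√(B/A)`. -/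
theorem stability_biGBessel_of_small_perturbation
    (μ : Measure Ω) (Φ Ψ Λ Γ : ∀ ω, H →L[ℂ] G ω) (BΦ BΨ A B : ℝ)
    (hBΦ : 0 < BΦ) (hBΨ : 0 < BΨ)
    (hΦ : IsContGBessel μ Φ BΦ) (hΨ : IsContGBessel μ Ψ BΨ)
    (hA : 0 < A) (hAB : A ≤ B) (hframe : IsContBiGFrame μ Φ Ψ A B)
    (hBochner₁ : ∀ f : H, Integrable (fun ω => adjoint (Ψ ω) (Φ ω f)) μ)
    (hBochner₂ : ∀ f : H, Integrable (fun ω => adjoint (Γ ω) (Λ ω f)) μ)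
    (D : ℝ) (hD0 : 0 < D) (hDA : D < A) (hD1 : D * Real.sqrt (B / A) < 1)
    (hineq : ∀ f : H,
      ‖∫ ω, (adjoint (Ψ ω) (Φ ω f) - adjoint (Γ ω) (Λ ω f)) ∂μ‖ ≤ D * ‖f‖) :
    IsContBiGBessel μ Λ Γ (Real.sqrt (BΦ * BΨ) + D * Real.sqrt (B / A)) := by
  intro f
  have hinner : ∀ ω, (inner ℂ (Λ ω f) (Γ ω f) : ℂ) = inner ℂ (adjoint (Γ ω) (Λ ω f)) f := by
    intro ω; rw [adjoint_inner_left]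
  have hint : Integrable (fun ω => (inner ℂ (Λ ω f) (Γ ω f) : ℂ)) μ := by
    have := (hBochner₂ f).inner_const (𝕜 := ℂ) f
    refine this.congr ?_
    exact Filter.Eventually.of_forall fun ω => (hinner ω).symm
  refine ⟨hint, ?_⟩
  set vI : H := ∫ ω, adjoint (Γ ω) (Λ ω f) ∂μ with hvI
  have hIv : ∫ ω, (inner ℂ (Λ ω f) (Γ ω f) : ℂ) ∂μ = inner ℂ vI f := by
    calc ∫ ω, (inner ℂ (Λ ω f) (Γ ω f) : ℂ) ∂μ
        = ∫ ω, (starRingEnd ℂ) (inner ℂ f (adjoint (Γ ω) (Λ ω f)) : ℂ) ∂μ := by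
          refine integral_congr_ae (Filter.Eventually.of_forall fun ω => ?_)
          show (inner ℂ (Λ ω f) (Γ ω f) : ℂ)
            = (starRingEnd ℂ) (inner ℂ f (adjoint (Γ ω) (Λ ω f)) : ℂ)
          rw [hinner ω, ← inner_conj_symm]
      _ = (starRingEnd ℂ) (∫ ω, (inner ℂ f (adjoint (Γ ω) (Λ ω f)) : ℂ) ∂μ) := integral_conj
      _ = (starRingEnd ℂ) (inner ℂ f vI : ℂ) := by rw [integral_inner (hBochner₂ f) f]
      _ = inner ℂ vI f := by rw [inner_conj_symm]
  have hwI : ‖∫ ω, adjoint (Ψ ω) (Φ ω f) ∂μ‖ ≤ Real.sqrt (BΦ * BΨ) * ‖f‖ :=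
    aux_norm_int μ Φ Ψ BΦ BΨ hBΦ hBΨ hΦ hΨ f (hBochner₁ f)
  have hsub : ∫ ω, (adjoint (Ψ ω) (Φ ω f) - adjoint (Γ ω) (Λ ω f)) ∂μ
      = (∫ ω, adjoint (Ψ ω) (Φ ω f) ∂μ) - vI := integral_sub (hBochner₁ f) (hBochner₂ f)
  have hv_norm : ‖vI‖ ≤ Real.sqrt (BΦ * BΨ) * ‖f‖ + D * ‖f‖ := by
    have h1 := hineq f
    rw [hsub] at h1
    calc ‖vI‖ = ‖(∫ ω, adjoint (Ψ ω) (Φ ω f) ∂μ)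
          - ((∫ ω, adjoint (Ψ ω) (Φ ω f) ∂μ) - vI)‖ := by rw [sub_sub_cancel]
      _ ≤ ‖∫ ω, adjoint (Ψ ω) (Φ ω f) ∂μ‖
          + ‖(∫ ω, adjoint (Ψ ω) (Φ ω f) ∂μ) - vI‖ := norm_sub_le _ _
      _ ≤ Real.sqrt (BΦ * BΨ) * ‖f‖ + D * ‖f‖ := add_le_add hwI h1
  have hre : (∫ ω, (inner ℂ (Λ ω f) (Γ ω f) : ℂ) ∂μ).re ≤ ‖vI‖ * ‖f‖ := by
    rw [hIv]
    calc (inner ℂ vI f : ℂ).re ≤ ‖(inner ℂ vI f : ℂ)‖ := Complex.re_le_norm _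
      _ = ‖(inner ℂ vI f : ℂ)‖ := rfl
      _ ≤ ‖vI‖ * ‖f‖ := norm_inner_le_norm _ _
  have hBA : 1 ≤ Real.sqrt (B / A) := Real.one_le_sqrt.mpr ((one_le_div hA).mpr hAB)
  have hfin : ‖vI‖ * ‖f‖ ≤ (Real.sqrt (BΦ * BΨ) + D * Real.sqrt (B / A)) * ‖f‖ ^ 2 := by
    nlinarith [mul_le_mul_of_nonneg_right hv_norm (norm_nonneg f),
      mul_nonneg (mul_nonneg hD0.le (sub_nonneg.mpr hBA)) (sq_nonneg ‖f‖)]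
  exact hre.trans hfin
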